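/- Let 0 < k₋ ≤ k⁺, let u : ℝ → ℂ be measurable, let A ∈ ℂ, τ, t ∈ ℝ with t ≠ τ, and C > 0, and assume |u(k) − A·exp(i k τ)| ≤ C/k for all k ∈ [k₋, k⁺]. Then |∫_{k₋}^{k⁺} u(k)·exp(−i k t)·k^{−1/2} dk| ≤ 3|A|/(|t − τ|·√(k₋)) + 2C/√(k₋). -/

import Mathlib

open MeasureTheory intervalIntegral

private lemma rpow_half_sqrt {x : ℝ} (hx : 0 < x) :
    x ^ (-(1 / 2 : ℝ)) = 1 / Real.sqrt x := by
  rw [Real.rpow_neg hx.le, ← Real.sqrt_eq_rpow, one_div]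

private lemma osc_bound (a b μ : ℝ) (ha : 0 < a) (hab : a ≤ b) (hμ : μ ≠ 0) :
    ‖∫ k in a..b, Complex.exp (Complex.I * μ * k) * ((k ^ (-(1 / 2 : ℝ)) : ℝ) : ℂ)‖ ≤
      2 / (|μ| * Real.sqrt a) := by
  have hb : 0 < b := lt_of_lt_of_le ha hab
  have hIμ : (Complex.I * μ) ≠ 0 := by
    simp [Complex.ext_iff, hμ]
  set g : ℝ → ℂ := fun k => ((k ^ (-(1 / 2 : ℝ)) : ℝ) : ℂ) with hg
  set g' : ℝ → ℂ := fun k => ((-(1 / 2 : ℝ) * k ^ (-(3 / 2 : ℝ)) : ℝ) : ℂ) with hg'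
  set v : ℝ → ℂ := fun k => Complex.exp (Complex.I * μ * k) / (Complex.I * μ) with hv
  set v' : ℝ → ℂ := fun k => Complex.exp (Complex.I * μ * k) with hv'
  have hpos : ∀ x ∈ Set.uIcc a b, 0 < x := by
    intro x hx
    rw [Set.uIcc_of_le hab] at hx
    exact lt_of_lt_of_le ha hx.1
  have hgderiv : ∀ x ∈ Set.uIcc a b, HasDerivAt g (g' x) x := by
    intro x hx
    have h0 := (Real.hasDerivAt_rpow_const (p := -(1 / 2 : ℝ))
      (Or.inl (hpos x hx).ne')).ofReal_comp (z := x)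
    have e2 : (-(1 / 2 : ℝ) - 1) = -(3 / 2 : ℝ) := by norm_num
    rw [e2] at h0
    exact h0
  have hvderiv : ∀ x ∈ Set.uIcc a b, HasDerivAt v (v' x) x := by
    intro x _
    have h1 : HasDerivAt (fun k : ℝ => ((k : ℂ))) 1 x := by
      simpa using (hasDerivAt_id x).ofReal_comp (z := x)
    have h2 : HasDerivAt (fun k : ℝ => Complex.I * μ * (k : ℂ)) (Complex.I * μ) x := by
      simpa using h1.const_mul (Complex.I * μ)
    have h3 := (h2.cexp).div_const (Complex.I * μ)
    simpa [hv, hv', mul_div_assoc, div_self hIμ] using h3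
  have hg'int : IntervalIntegrable g' volume a b := by
    apply ContinuousOn.intervalIntegrable
    apply Continuous.comp_continuousOn Complex.continuous_ofReal
    exact continuousOn_const.mul
      (continuousOn_id.rpow_const (fun x hx => Or.inl (hpos x hx).ne'))
  have hv'int : IntervalIntegrable v' volume a b := by
    apply Continuous.intervalIntegrable
    exact Complex.continuous_exp.comp (by continuity)
  have ibp := integral_mul_deriv_eq_deriv_mul hgderiv hvderiv hg'int hv'int
  have hswap : (∫ k in a..b, Complex.exp (Complex.I * μ * k) * ((k ^ (-(1 / 2 : ℝ)) : ℝ) : ℂ))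
      = ∫ k in a..b, g k * v' k := by
    simp only [hg, hv', mul_comm]
  rw [hswap, ibp]
  have hnormv : ∀ k : ℝ, ‖v k‖ = 1 / |μ| := by
    intro k
    have h1 : ‖Complex.exp (Complex.I * μ * k)‖ = 1 := by
      rw [Complex.norm_exp]
      simp
    rw [hv]
    simp only [norm_div, h1, norm_mul, Complex.norm_I, one_mul,
      Complex.norm_real, Real.norm_eq_abs]
  have hμpos : 0 < |μ| := abs_pos.mpr hμ
  have hsa : 0 < Real.sqrt a := Real.sqrt_pos.mpr ha
  have hsb : 0 < Real.sqrt b := Real.sqrt_pos.mpr hb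
  have hgb : ‖g b‖ = 1 / Real.sqrt b := by
    rw [hg]
    simp only [Complex.norm_real, Real.norm_eq_abs]
    rw [rpow_half_sqrt hb, abs_of_pos (by positivity)]
  have hga : ‖g a‖ = 1 / Real.sqrt a := by
    rw [hg]
    simp only [Complex.norm_real, Real.norm_eq_abs]
    rw [rpow_half_sqrt ha, abs_of_pos (by positivity)]
  -- bound on the remaining integral
  have hint : ‖∫ k in a..b, g' k * v k‖ ≤ (1 / Real.sqrt a - 1 / Real.sqrt b) / |μ| := by
    have hb1 : ∀ᵐ k ∂(volume.restrict (Set.uIoc a b)),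
        ‖g' k * v k‖ ≤ (1 / 2) * k ^ (-(3 / 2 : ℝ)) / |μ| := by
      rw [Set.uIoc_of_le hab]
      filter_upwards [ae_restrict_mem measurableSet_Ioc] with k hk
      have hkpos : 0 < k := lt_trans ha hk.1
      rw [norm_mul, hnormv, hg']
      simp only [Complex.norm_real, Real.norm_eq_abs]
      rw [abs_mul, abs_neg, abs_of_pos (Real.rpow_pos_of_pos hkpos _),
        abs_of_pos (by norm_num : (0:ℝ) < 1/2)]
      rw [div_eq_mul_one_div ((1/2) * k ^ (-(3/2:ℝ))) |μ|]
    have hbint : IntervalIntegrable (fun k => (1 / 2) * k ^ (-(3 / 2 : ℝ)) / |μ|)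
        volume a b := by
      apply ContinuousOn.intervalIntegrable
      apply ContinuousOn.div_const
      exact continuousOn_const.mul
        (continuousOn_id.rpow_const (fun x hx => Or.inl (hpos x hx).ne'))
    refine le_trans (le_trans (intervalIntegral.norm_integral_le_of_norm_le hab
      ((ae_restrict_iff' measurableSet_Ioc).1 (by rw [Set.uIoc_of_le hab] at hb1; exact hb1))
      hbint) (le_abs_self _)) ?_
    have hcomp : (∫ k in a..b, (1 / 2) * k ^ (-(3 / 2 : ℝ)) / |μ|)
        = (1 / Real.sqrt a - 1 / Real.sqrt b) / |μ| := by
      have : (∫ k in a..b, (1 / 2) * k ^ (-(3 / 2 : ℝ)) / |μ|)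
          = (1 / 2) / |μ| * ∫ k in a..b, k ^ (-(3 / 2 : ℝ)) := by
        rw [← intervalIntegral.integral_const_mul]
        congr 1
        ext k
        ring
      rw [this, integral_rpow (Or.inr ⟨by norm_num, by
        rw [Set.uIcc_of_le hab]; intro hc; exact absurd hc.1 (not_le.mpr ha)⟩)]
      have e1 : (-(3 / 2 : ℝ) + 1) = -(1 / 2 : ℝ) := by norm_num
      rw [e1, rpow_half_sqrt ha, rpow_half_sqrt hb]
      field_simp
      ring
    rw [hcomp]
    refine le_of_eq (abs_of_nonneg ?_)
    apply div_nonneg _ (abs_nonneg _)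
    rw [sub_nonneg]
    exact one_div_le_one_div_of_le hsa (Real.sqrt_le_sqrt hab)
  calc ‖g b * v b - g a * v a - ∫ k in a..b, g' k * v k‖
      ≤ ‖g b * v b - g a * v a‖ + ‖∫ k in a..b, g' k * v k‖ := norm_sub_le _ _
    _ ≤ ‖g b * v b‖ + ‖g a * v a‖ + ‖∫ k in a..b, g' k * v k‖ := by
        gcongr; exact norm_sub_le _ _
    _ ≤ 1 / Real.sqrt b * (1 / |μ|) + 1 / Real.sqrt a * (1 / |μ|)
        + (1 / Real.sqrt a - 1 / Real.sqrt b) / |μ| := by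
        rw [norm_mul, norm_mul, hnormv, hnormv, hgb, hga]
        gcongr
    _ = 2 / (|μ| * Real.sqrt a) := by
        field_simp
        ring

/-- Off-line case of Proposition 4.1 in dimension `n = 2`, in abstract form. -/
theorem stmt_9 (kminus kplus : ℝ) (hk : 0 < kminus) (hkk : kminus ≤ kplus)
    (u : ℝ → ℂ) (hu : Measurable u) (A : ℂ) (τ t C : ℝ) (ht : t ≠ τ) (hC : 0 < C)
    (h : ∀ k ∈ Set.Icc kminus kplus, ‖u k - A * Complex.exp (Complex.I * k * τ)‖ ≤ C / k) :
    ‖∫ k in kminus..kplus,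
        u k * Complex.exp (-(Complex.I * k * t)) * ((k ^ (-(1 / 2 : ℝ)) : ℝ) : ℂ)‖ ≤
      3 * ‖A‖ / (|t - τ| * Real.sqrt kminus) + 2 * C / Real.sqrt kminus := by
  set a := kminus
  set b := kplus
  set μ : ℝ := τ - t with hμdef
  have hμ : μ ≠ 0 := sub_ne_zero.mpr (Ne.symm ht)
  have hsa : 0 < Real.sqrt a := Real.sqrt_pos.mpr hk
  set g : ℝ → ℂ := fun k => ((k ^ (-(1 / 2 : ℝ)) : ℝ) : ℂ) with hg
  have hpos : ∀ x ∈ Set.uIcc a b, 0 < x := by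
    intro x hx
    rw [Set.uIcc_of_le hkk] at hx
    exact lt_of_lt_of_le hk hx.1
  have hgcont : ContinuousOn g (Set.uIcc a b) :=
    Continuous.comp_continuousOn Complex.continuous_ofReal
      (continuousOn_id.rpow_const (fun x hx => Or.inl (hpos x hx).ne'))
  -- splitting
  have hexp : ∀ k : ℝ, Complex.exp (Complex.I * (μ : ℂ) * k)
      = Complex.exp (Complex.I * k * τ) * Complex.exp (-(Complex.I * k * t)) := by
    intro k
    rw [← Complex.exp_add]
    congr 1
    push_cast [hμdef]
    ring
  have split : ∀ k : ℝ, u k * Complex.exp (-(Complex.I * k * t)) * g k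
      = A * (Complex.exp (Complex.I * (μ : ℂ) * k) * g k)
        + (u k - A * Complex.exp (Complex.I * k * τ))
          * Complex.exp (-(Complex.I * k * t)) * g k := by
    intro k
    rw [hexp k]
    ring
  -- integrability of the two pieces
  have hint1 : IntervalIntegrable
      (fun k : ℝ => A * (Complex.exp (Complex.I * (μ : ℂ) * k) * g k)) volume a b := by
    apply ContinuousOn.intervalIntegrable
    exact continuousOn_const.mul
      ((Complex.continuous_exp.comp (by continuity)).continuousOn.mul hgcont)
  have m1 : Measurable fun k : ℝ => Complex.exp (Complex.I * (k : ℂ) * (τ : ℂ)) :=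
    Complex.measurable_exp.comp
      ((Complex.measurable_ofReal.const_mul Complex.I).mul_const (τ : ℂ))
  have m2 : Measurable fun k : ℝ => Complex.exp (-(Complex.I * (k : ℂ) * (t : ℂ))) :=
    Complex.measurable_exp.comp
      (((Complex.measurable_ofReal.const_mul Complex.I).mul_const (t : ℂ)).neg)
  have m3 : AEStronglyMeasurable g (volume.restrict (Set.Ioc a b)) := by
    apply ContinuousOn.aestronglyMeasurable _ measurableSet_Ioc
    apply hgcont.mono
    rw [Set.uIcc_of_le hkk]
    exact Set.Ioc_subset_Icc_self
  have hmeas2 : AEStronglyMeasurable (fun k : ℝ => (u k - A * Complex.exp (Complex.I * k * τ))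
      * Complex.exp (-(Complex.I * k * t)) * g k) (volume.restrict (Set.Ioc a b)) :=
    (((hu.sub (m1.const_mul A)).aestronglyMeasurable.mul
      m2.aestronglyMeasurable).mul m3)
  have hbound2 : ∀ k ∈ Set.Ioc a b,
      ‖(u k - A * Complex.exp (Complex.I * k * τ))
        * Complex.exp (-(Complex.I * k * t)) * g k‖ ≤ C * k ^ (-(3 / 2 : ℝ)) := by
    intro k hkm
    have hkpos : 0 < k := lt_trans hk hkm.1
    have hexp1 : ‖Complex.exp (-(Complex.I * k * t))‖ = 1 := by
      rw [Complex.norm_exp]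
      simp
    have hgk : ‖g k‖ = k ^ (-(1 / 2 : ℝ)) := by
      rw [hg]
      simp only [Complex.norm_real, Real.norm_eq_abs]
      exact abs_of_pos (Real.rpow_pos_of_pos hkpos _)
    rw [norm_mul, norm_mul, hexp1, hgk, mul_one]
    have h1 := h k ⟨le_of_lt hkm.1, hkm.2⟩
    have e0 : k ^ (-(3 / 2 : ℝ)) = k⁻¹ * k ^ (-(1 / 2 : ℝ)) := by
      rw [← Real.rpow_neg_one k, ← Real.rpow_add hkpos]
      norm_num
    have e : C * k ^ (-(3 / 2 : ℝ)) = (C / k) * k ^ (-(1 / 2 : ℝ)) := by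
      rw [e0, div_eq_mul_inv]
      ring
    rw [e]
    gcongr
  have hint2 : IntervalIntegrable
      (fun k : ℝ => (u k - A * Complex.exp (Complex.I * k * τ))
        * Complex.exp (-(Complex.I * k * t)) * g k) volume a b := by
    rw [intervalIntegrable_iff_integrableOn_Ioc_of_le hkk]
    apply Integrable.mono' (g := fun _ : ℝ => C * a ^ (-(3 / 2 : ℝ)))
      (integrableOn_const measure_Ioc_lt_top.ne)
      hmeas2
    filter_upwards [ae_restrict_mem measurableSet_Ioc] with k hkm
    refine le_trans (hbound2 k hkm) ?_
    exact mul_le_mul_of_nonneg_left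
      (Real.rpow_le_rpow_of_nonpos hk hkm.1.le (by norm_num)) hC.le
  -- rewrite the integral
  have hsplit : (∫ k in a..b,
        u k * Complex.exp (-(Complex.I * k * t)) * g k)
      = (∫ k in a..b, A * (Complex.exp (Complex.I * (μ : ℂ) * k) * g k))
        + ∫ k in a..b, (u k - A * Complex.exp (Complex.I * k * τ))
            * Complex.exp (-(Complex.I * k * t)) * g k := by
    rw [← intervalIntegral.integral_add hint1 hint2]
    apply intervalIntegral.integral_congr
    intro k _
    exact split k
  rw [hsplit]
  have hI1 : ‖∫ k in a..b, A * (Complex.exp (Complex.I * (μ : ℂ) * k) * g k)‖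
      ≤ ‖A‖ * (2 / (|μ| * Real.sqrt a)) := by
    rw [intervalIntegral.integral_const_mul, norm_mul]
    exact mul_le_mul_of_nonneg_left (osc_bound a b μ hk hkk hμ) (norm_nonneg A)
  have hI2 : ‖∫ k in a..b, (u k - A * Complex.exp (Complex.I * k * τ))
        * Complex.exp (-(Complex.I * k * t)) * g k‖ ≤ 2 * C / Real.sqrt a := by
    have hbd : ∀ᵐ k ∂(volume.restrict (Set.uIoc a b)),
        ‖(u k - A * Complex.exp (Complex.I * k * τ))
          * Complex.exp (-(Complex.I * k * t)) * g k‖ ≤ C * k ^ (-(3 / 2 : ℝ)) := by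
      rw [Set.uIoc_of_le hkk]
      filter_upwards [ae_restrict_mem measurableSet_Ioc] with k hkm
      exact hbound2 k hkm
    have hbint : IntervalIntegrable (fun k => C * k ^ (-(3 / 2 : ℝ))) volume a b := by
      apply ContinuousOn.intervalIntegrable
      exact continuousOn_const.mul
        (continuousOn_id.rpow_const (fun x hx => Or.inl (hpos x hx).ne'))
    refine le_trans (le_trans (intervalIntegral.norm_integral_le_of_norm_le hkk
      ((ae_restrict_iff' measurableSet_Ioc).1 (by rw [Set.uIoc_of_le hkk] at hbd; exact hbd))
      hbint) (le_abs_self _)) ?_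
    have hcomp : (∫ k in a..b, C * k ^ (-(3 / 2 : ℝ)))
        = C * (2 * (1 / Real.sqrt a - 1 / Real.sqrt b)) := by
      rw [intervalIntegral.integral_const_mul,
        integral_rpow (Or.inr ⟨by norm_num, by
          rw [Set.uIcc_of_le hkk]; intro hc; exact absurd hc.1 (not_le.mpr hk)⟩)]
      have e1 : (-(3 / 2 : ℝ) + 1) = -(1 / 2 : ℝ) := by norm_num
      rw [e1, rpow_half_sqrt hk, rpow_half_sqrt (lt_of_lt_of_le hk hkk)]
      congr 1
      ring
    rw [hcomp]
    have hsb : 0 < Real.sqrt b := Real.sqrt_pos.mpr (lt_of_lt_of_le hk hkk)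
    have : |C * (2 * (1 / Real.sqrt a - 1 / Real.sqrt b))|
        = C * (2 * (1 / Real.sqrt a - 1 / Real.sqrt b)) := by
      apply abs_of_nonneg
      apply mul_nonneg hC.le
      apply mul_nonneg (by norm_num)
      rw [sub_nonneg]
      exact one_div_le_one_div_of_le hsa (Real.sqrt_le_sqrt hkk)
    rw [this]
    calc C * (2 * (1 / Real.sqrt a - 1 / Real.sqrt b))
        ≤ C * (2 * (1 / Real.sqrt a)) := by
          gcongr
          exact sub_le_self _ (by positivity)
      _ = 2 * C / Real.sqrt a := by ring
  calc ‖(∫ k in a..b, A * (Complex.exp (Complex.I * (μ : ℂ) * k) * g k))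
        + ∫ k in a..b, (u k - A * Complex.exp (Complex.I * k * τ))
            * Complex.exp (-(Complex.I * k * t)) * g k‖
      ≤ ‖A‖ * (2 / (|μ| * Real.sqrt a)) + 2 * C / Real.sqrt a := by
        refine le_trans (norm_add_le _ _) (add_le_add hI1 hI2)
    _ ≤ 3 * ‖A‖ / (|t - τ| * Real.sqrt a) + 2 * C / Real.sqrt a := by
        gcongr ?_ + _
        have habs : |t - τ| = |μ| := by rw [hμdef, abs_sub_comm]
        rw [habs]
        have hμpos : 0 < |μ| := abs_pos.mpr hμ
        have hX : 0 < |μ| * Real.sqrt a := mul_pos hμpos hsa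
        have e2 : ‖A‖ * (2 / (|μ| * Real.sqrt a)) = 2 * ‖A‖ / (|μ| * Real.sqrt a) := by
          ring
        rw [e2, div_le_div_iff₀ hX hX]
        nlinarith [norm_nonneg A, hX]
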